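/- arXiv:2404.08902 — 2 statements merged into one kernel-verified Lean document; each statement's English description precedes it below -/
import Mathlib

section
/- (Discrete Gronwall lemma) Let a_k, b_k, c_k, d_k, γ_k, Δt_k be nonnegative reals satisfying a_{k+1} − a_k + b_{k+1}Δt_{k+1} + c_{k+1}Δt_{k+1} − c_kΔt_k ≤ a_k d_k Δt_k + γ_{k+1}Δt_{k+1} for all 0 ≤ k ≤ m. Then a_{m+1} + Σ_{k=0}^{m+1} b_kΔt_k ≤ exp(Σ_{k=0}^m d_kΔt_k) · ( a_0 + (b_0+c_0)Δt_0 + Σ_{k=1}^{m+1} γ_kΔt_k ). -/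
namespace Paper

/-- Discrete Gronwall lemma. -/
theorem discrete_gronwall (a b c d γ Δt : ℕ → ℝ) (m : ℕ)
    (ha : ∀ k, 0 ≤ a k) (hb : ∀ k, 0 ≤ b k) (hc : ∀ k, 0 ≤ c k)
    (hd : ∀ k, 0 ≤ d k) (hγ : ∀ k, 0 ≤ γ k) (hΔt : ∀ k, 0 ≤ Δt k)
    (hrec : ∀ k ≤ m,
      a (k+1) - a k + b (k+1) * Δt (k+1) + c (k+1) * Δt (k+1) - c k * Δt k
        ≤ a k * d k * Δt k + γ (k+1) * Δt (k+1)) :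
    a (m+1) + ∑ k ∈ Finset.range (m+2), b k * Δt k ≤
      Real.exp (∑ k ∈ Finset.range (m+1), d k * Δt k) *
        (a 0 + (b 0 + c 0) * Δt 0 + ∑ k ∈ Finset.Icc 1 (m+1), γ k * Δt k) := by
  set X : ℝ := a 0 + (b 0 + c 0) * Δt 0 with hX
  set P : ℕ → ℝ := fun n => ∏ k ∈ Finset.range n, (1 + d k * Δt k) with hPdef
  have hfac : ∀ k, (0:ℝ) ≤ 1 + d k * Δt k := fun k => by
    nlinarith [mul_nonneg (hd k) (hΔt k)]
  have hP1 : ∀ n, (1:ℝ) ≤ P n := by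
    intro n
    show (1:ℝ) ≤ ∏ k ∈ Finset.range n, (1 + d k * Δt k)
    induction n with
    | zero => simp
    | succ n ih =>
      rw [Finset.prod_range_succ]
      nlinarith [mul_nonneg (hd n) (hΔt n)]
  have hGnn : ∀ n, (0:ℝ) ≤ ∑ k ∈ Finset.Icc 1 n, γ k * Δt k := fun n =>
    Finset.sum_nonneg (fun k _ => mul_nonneg (hγ k) (hΔt k))
  have hXnn : 0 ≤ X := by
    have := mul_nonneg (add_nonneg (hb 0) (hc 0)) (hΔt 0)
    nlinarith [ha 0]
  have key : ∀ n, n ≤ m + 1 →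
      a n + (∑ k ∈ Finset.range (n+1), b k * Δt k) + c n * Δt n ≤
        P n * (X + ∑ k ∈ Finset.Icc 1 n, γ k * Δt k) := by
    intro n
    induction n with
    | zero =>
      intro _
      simp [hPdef, hX, Finset.sum_range_succ]
      ring_nf
      simp
    | succ n ih =>
      intro hn
      have hnm : n ≤ m := Nat.lt_succ_iff.mp hn
      have ihn := ih (le_trans (Nat.le_succ n) hn)
      have hr := hrec n hnm
      have hSsucc : ∑ k ∈ Finset.range (n+2), b k * Δt k
          = (∑ k ∈ Finset.range (n+1), b k * Δt k) + b (n+1) * Δt (n+1) :=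
        Finset.sum_range_succ _ _
      have hGsucc : ∑ k ∈ Finset.Icc 1 (n+1), γ k * Δt k
          = (∑ k ∈ Finset.Icc 1 n, γ k * Δt k) + γ (n+1) * Δt (n+1) :=
        Finset.sum_Icc_succ_top (by omega) _
      set S : ℝ := ∑ k ∈ Finset.range (n+1), b k * Δt k with hS
      set G : ℝ := ∑ k ∈ Finset.Icc 1 n, γ k * Δt k with hG
      have hSnn : 0 ≤ S := Finset.sum_nonneg (fun k _ => mul_nonneg (hb k) (hΔt k))
      -- E(n+1) ≤ (1 + d n Δt n) * E n + γ(n+1)Δt(n+1)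
      have hEn : a (n+1) + (S + b (n+1) * Δt (n+1)) + c (n+1) * Δt (n+1)
          ≤ (1 + d n * Δt n) * (a n + S + c n * Δt n) + γ (n+1) * Δt (n+1) := by
        have hdnn := mul_nonneg (hd n) (hΔt n)
        have hcnn := mul_nonneg (hc n) (hΔt n)
        nlinarith [mul_nonneg hdnn hSnn, mul_nonneg hdnn hcnn]
      have hPsucc : P (n+1) = P n * (1 + d n * Δt n) := Finset.prod_range_succ _ _
      have hstep : (1 + d n * Δt n) * (a n + S + c n * Δt n)
          ≤ P (n+1) * (X + G) := by
        rw [hPsucc]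
        calc (1 + d n * Δt n) * (a n + S + c n * Δt n)
            ≤ (1 + d n * Δt n) * (P n * (X + G)) :=
              mul_le_mul_of_nonneg_left ihn (hfac n)
          _ = P n * (1 + d n * Δt n) * (X + G) := by ring
      rw [hSsucc, hGsucc]
      have hγnn := mul_nonneg (hγ (n+1)) (hΔt (n+1))
      have hPn1 := hP1 (n+1)
      nlinarith [hEn, hstep]
  have hkey := key (m+1) le_rfl
  have hPexp : P (m+1) ≤ Real.exp (∑ k ∈ Finset.range (m+1), d k * Δt k) := by
    rw [Real.exp_sum]
    apply Finset.prod_le_prod (fun k _ => hfac k)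
    intro k _
    linarith [Real.add_one_le_exp (d k * Δt k)]
  have hc' := mul_nonneg (hc (m+1)) (hΔt (m+1))
  have hmul : P (m+1) * (X + ∑ k ∈ Finset.Icc 1 (m+1), γ k * Δt k)
      ≤ Real.exp (∑ k ∈ Finset.range (m+1), d k * Δt k) *
        (X + ∑ k ∈ Finset.Icc 1 (m+1), γ k * Δt k) :=
    mul_le_mul_of_nonneg_right hPexp (add_nonneg hXnn (hGnn _))
  linarith [hkey, hmul]

end Paper
end

section
/- Suppose R^n > 0, E(m̃^{n+1}) + K_0 > 0, γ > 0, Δt > 0, and R^{n+1}, ξ^{n+1} satisfy (R^{n+1} − R^n)/Δt = −γ ξ^{n+1} ‖B^n‖^2 with ξ^{n+1} = R^{n+1} / (E(m̃^{n+1}) + K_0), where ‖B^n‖^2 ≥ 0. Then R^{n+1} = R^n / (1 + Δt γ ‖B^n‖^2 / (E(m̃^{n+1}) + K_0)), and hence 0 < R^{n+1} ≤ R^n with strict inequality R^{n+1} < R^n whenever ‖B^n‖ ≠ 0; moreover ξ^{n+1} > 0. -/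
/-- One step of the GSAV update: explicit formula for R^{n+1}, positivity and decrease. -/
theorem gsav_step (Rn Rn1 ξ K0 Em γ Δt B2 : ℝ)
    (hRn : 0 < Rn) (hK0 : 0 < K0) (hEm : 0 ≤ Em) (hγ : 0 < γ) (hΔt : 0 < Δt)
    (hB2 : 0 ≤ B2)
    (hupd : (Rn1 - Rn) / Δt = -γ * ξ * B2)
    (hξ : ξ = Rn1 / (Em + K0)) :
    Rn1 = Rn / (1 + Δt * γ * B2 / (Em + K0)) ∧
      0 < Rn1 ∧ Rn1 ≤ Rn ∧ (B2 ≠ 0 → Rn1 < Rn) ∧ 0 < ξ := by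
  have hE : 0 < Em + K0 := by linarith
  have hd : 0 < 1 + Δt * γ * B2 / (Em + K0) := by positivity
  have hform : Rn1 = Rn / (1 + Δt * γ * B2 / (Em + K0)) := by
    subst hξ
    field_simp at hupd ⊢
    nlinarith [hupd]
  have hpos : 0 < Rn1 := by rw [hform]; positivity
  have hle : Rn1 ≤ Rn := by
    rw [hform]
    have h0 : 0 ≤ Δt * γ * B2 / (Em + K0) := by positivity
    exact div_le_self hRn.le (by linarith)
  refine ⟨hform, hpos, hle, ?_, ?_⟩
  · intro hB
    have hB' : 0 < B2 := lt_of_le_of_ne hB2 (Ne.symm hB)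
    rw [hform]
    apply div_lt_self hRn
    have : 0 < Δt * γ * B2 / (Em + K0) := by positivity
    linarith
  · rw [hξ]; positivity
end
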